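/- A subset A of ℝ^n is open if and only if for every infinitely differentiable curve c : ℝ → ℝ^n the preimage c⁻¹(A) is open in ℝ. Equivalently, the usual topology of ℝ^n is the final topology with respect to the family of all C^∞ curves ℝ → ℝ^n. -/

import Mathlib

open scoped ContDiff

section Aux

variable {n : ℕ}

/-- Bound on all iterated derivatives of a bump function. -/
private lemma bump_bound (φ : ContDiffBump (0:ℝ)) (m : ℕ) :
    ∃ M : ℝ, 0 ≤ M ∧ ∀ t : ℝ, ‖iteratedDeriv m (φ : ℝ → ℝ) t‖ ≤ M := by
  have h1 : ContDiff ℝ ((⊤ : ℕ∞) : WithTop ℕ∞) (φ : ℝ → ℝ) := φ.contDiff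
  have h2 : Continuous (iteratedFDeriv ℝ m (φ : ℝ → ℝ)) :=
    h1.continuous_iteratedFDeriv (by exact_mod_cast le_top)
  obtain ⟨C, hC⟩ := h2.bounded_above_of_compact_support
      (φ.hasCompactSupport.iteratedFDeriv m)
  refine ⟨max C 0, le_max_right _ _, fun t => ?_⟩
  rw [← norm_iteratedFDeriv_eq_norm_iteratedDeriv]
  exact (hC t).trans (le_max_left _ _)

/-- The special curve lemma direction: if the preimage of `A` under every smooth curve is
open, then `A` is open. -/
private lemma key (A : Set (Fin n → ℝ))
    (hA : ∀ c : ℝ → Fin n → ℝ, ContDiff ℝ ∞ c → IsOpen (c ⁻¹' A)) : IsOpen A := by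
  rw [Metric.isOpen_iff]
  by_contra hcon
  push_neg at hcon
  obtain ⟨x, hxA, hx⟩ := hcon
  have hpt : ∀ ε : ℝ, 0 < ε → ∃ y, dist y x < ε ∧ y ∉ A := by
    intro ε hε
    obtain ⟨y, hy1, hy2⟩ := Set.not_subset.1 (hx ε hε)
    exact ⟨y, Metric.mem_ball.1 hy1, hy2⟩
  -- scales and amplitudes
  set a : ℕ → ℝ := fun k => ((k : ℝ) + 1) * ((k : ℝ) + 2) with ha_def
  have ha1 : ∀ k, 1 ≤ a k := by
    intro k
    have : (0:ℝ) ≤ (k:ℝ) := Nat.cast_nonneg k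
    simp only [ha_def]; nlinarith
  have ha0 : ∀ k, 0 < a k := fun k => lt_of_lt_of_le one_pos (ha1 k)
  set δ : ℕ → ℝ := fun k => (1/2 : ℝ) ^ k * ((a k) ^ k)⁻¹ with hδ_def
  have hδ0 : ∀ k, 0 < δ k := by
    intro k
    have := ha0 k
    simp only [hδ_def]
    positivity
  choose y hy1 hy2 using fun k => hpt (δ k) (hδ0 k)
  set v : ℕ → Fin n → ℝ := fun k => y k - x with hv_def
  have hv : ∀ k, ‖v k‖ ≤ δ k := by
    intro k
    have := hy1 k
    rw [dist_eq_norm] at this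
    exact this.le
  -- bump function
  set φ : ContDiffBump (0:ℝ) := ⟨1/2, 1, by norm_num, by norm_num⟩ with hφ_def
  choose M hM0 hMb using bump_bound φ
  -- the curves
  set b : ℕ → ℝ := fun k => -(a k * ((k : ℝ) + 1)⁻¹) with hb_def
  set ψ : ℕ → ℝ → ℝ := fun k t => (φ : ℝ → ℝ) (a k * t + b k) with hψ_def
  have hψdiff : ∀ (k : ℕ) (N : ℕ∞), ContDiff ℝ N (ψ k) := by
    intro k N
    have h1 : ContDiff ℝ N (fun t : ℝ => a k * t + b k) :=
      (contDiff_const.mul contDiff_id).add contDiff_const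
    exact (φ.contDiff).comp h1
  have hψd : ∀ (k m : ℕ) (t : ℝ),
      iteratedDeriv m (ψ k) t = (a k) ^ m • iteratedDeriv m (φ : ℝ → ℝ) (a k * t + b k) := by
    intro k m t
    have hg : ContDiff ℝ m (fun s : ℝ => (φ : ℝ → ℝ) (s + b k)) :=
      (φ.contDiff).comp (contDiff_id.add contDiff_const)
    have h1 : ψ k = fun u : ℝ => (fun s : ℝ => (φ : ℝ → ℝ) (s + b k)) (a k * u) := rfl
    rw [h1, iteratedDeriv_comp_const_smul hg (a k), iteratedDeriv_comp_add_const]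
  set f : ℕ → ℝ → Fin n → ℝ := fun k t => ψ k t • v k with hf_def
  have hfdiff : ∀ (k : ℕ) (N : ℕ∞), ContDiff ℝ N (f k) := fun k N =>
    (hψdiff k N).smul contDiff_const
  set u : ℕ → ℕ → ℝ := fun m k => δ k * ((a k) ^ m * M m) with hu_def
  have hbound : ∀ (m k : ℕ) (t : ℝ), ‖iteratedFDeriv ℝ m (f k) t‖ ≤ u m k := by
    intro m k t
    have hcomp : f k = (ContinuousLinearMap.toSpanSingleton ℝ (v k)) ∘ (ψ k) := by
      funext t
      simp [hf_def, ContinuousLinearMap.toSpanSingleton_apply]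
    rw [hcomp, ContinuousLinearMap.iteratedFDeriv_comp_left _ (hψdiff k ⊤).contDiffAt (x := t) (by exact_mod_cast le_top)]
    calc ‖(ContinuousLinearMap.toSpanSingleton ℝ (v k)).compContinuousMultilinearMap
            (iteratedFDeriv ℝ m (ψ k) t)‖
        ≤ ‖ContinuousLinearMap.toSpanSingleton ℝ (v k)‖ * ‖iteratedFDeriv ℝ m (ψ k) t‖ :=
          ContinuousLinearMap.norm_compContinuousMultilinearMap_le _ _
      _ = ‖v k‖ * ‖iteratedDeriv m (ψ k) t‖ := by
          rw [ContinuousLinearMap.norm_toSpanSingleton,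
            norm_iteratedFDeriv_eq_norm_iteratedDeriv]
      _ ≤ δ k * ((a k) ^ m * M m) := by
          rw [hψd k m t, norm_smul]
          have h1 : ‖(a k) ^ m‖ = (a k) ^ m := by
            rw [Real.norm_eq_abs, abs_of_pos (pow_pos (ha0 k) m)]
          rw [h1]
          refine mul_le_mul (hv k) ?_ (by positivity) (hδ0 k).le
          exact mul_le_mul_of_nonneg_left (hMb m _) (pow_pos (ha0 k) m).le
  have hsum : ∀ m : ℕ, Summable (u m) := by
    intro m
    rw [← summable_nat_add_iff m]
    refine Summable.of_nonneg_of_le (fun k => ?_) (fun k => ?_)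
      ((summable_geometric_of_lt_one (by norm_num) (by norm_num : (1/2:ℝ) < 1)).mul_right (M m))
    · have := ha0 (k + m); have := hδ0 (k + m); have := hM0 m
      simp only [hu_def]
      positivity
    · have hA0 : 0 < a (k + m) := ha0 (k + m)
      have hpow : (a (k + m)) ^ m ≤ (a (k + m)) ^ (k + m) :=
        pow_le_pow_right₀ (ha1 (k + m)) (Nat.le_add_left m k)
      have hpos : (0:ℝ) < (a (k + m)) ^ (k + m) := pow_pos hA0 _
      have h1 : (a (k + m)) ^ m * ((a (k + m)) ^ (k + m))⁻¹ ≤ 1 := by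
        rw [← div_eq_mul_inv, div_le_one hpos]; exact hpow
      have h2 : ((1:ℝ)/2) ^ (k + m) ≤ ((1:ℝ)/2) ^ k :=
        pow_le_pow_of_le_one (by norm_num) (by norm_num) (Nat.le_add_right k m)
      calc u m (k + m)
          = ((1/2:ℝ) ^ (k + m)) * ((a (k + m)) ^ m * ((a (k + m)) ^ (k + m))⁻¹) * M m := by
            simp only [hu_def, hδ_def]; ring
        _ ≤ ((1/2:ℝ) ^ (k + m)) * 1 * M m := by
            refine mul_le_mul_of_nonneg_right (mul_le_mul_of_nonneg_left h1 (by positivity))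
              (hM0 m)
        _ ≤ (1/2:ℝ) ^ k * M m := by
            rw [mul_one]
            exact mul_le_mul_of_nonneg_right h2 (hM0 m)
  -- the curve
  set c : ℝ → Fin n → ℝ := fun t => x + ∑' k, f k t with hc_def
  have hcdiff : ContDiff ℝ ∞ c := by
    refine contDiff_const.add ?_
    exact contDiff_tsum (fun k => hfdiff k _) (fun m _ => hsum m)
      (fun m k t _ => hbound m k t)
  have hopen := hA c hcdiff
  -- evaluations
  have hψ0 : ∀ j, ψ j 0 = 0 := by
    intro j
    have hj : (0:ℝ) < (j:ℝ) + 1 := by positivity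
    apply φ.zero_of_le_dist
    have harg : a j * 0 + b j = -((j:ℝ) + 2) := by
      simp only [hb_def, ha_def]
      field_simp
      ring
    rw [harg]
    simp only [hφ_def, Real.dist_eq, sub_zero, abs_neg]
    rw [abs_of_pos (by positivity : (0:ℝ) < (j:ℝ) + 2)]
    have : (0:ℝ) ≤ (j:ℝ) := Nat.cast_nonneg j
    linarith
  have hc0 : c 0 = x := by
    simp only [hc_def]
    have : ∀ j : ℕ, f j 0 = 0 := by
      intro j; simp [hf_def, hψ0 j]
    simp [this, tsum_zero]
  have hck : ∀ k : ℕ, c (((k : ℝ) + 1)⁻¹) = y k := by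
    intro k
    have hK : (0:ℝ) < (k:ℝ) + 1 := by positivity
    have hψk : ψ k (((k : ℝ) + 1)⁻¹) = 1 := by
      have harg : a k * ((k:ℝ) + 1)⁻¹ + b k = 0 := by
        simp only [hb_def]; ring
      simp only [hψ_def]
      rw [harg]
      exact φ.one_of_mem_closedBall (by
        simp only [hφ_def, Metric.mem_closedBall, dist_self]
        norm_num)
    have hψj : ∀ j : ℕ, j ≠ k → ψ j (((k : ℝ) + 1)⁻¹) = 0 := by
      intro j hjk
      have hJ : (0:ℝ) < (j:ℝ) + 1 := by positivity
      apply φ.zero_of_le_dist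
      simp only [hφ_def, Real.dist_eq, sub_zero]
      set K : ℝ := (k:ℝ) + 1
      set J : ℝ := (j:ℝ) + 1
      have hval : a j * K⁻¹ + b j = (J + 1) * (J - K) / K := by
        simp only [hb_def, ha_def]
        field_simp
        ring
      rw [hval, abs_div, abs_of_pos hK, le_div_iff₀ hK, one_mul, abs_mul,
        abs_of_pos (by positivity : (0:ℝ) < J + 1)]
      rcases lt_or_gt_of_ne hjk with h | h
      · -- j < k, so K ≥ J + 1
        have hKJ : J + 1 ≤ K := by
          have : (j:ℝ) + 1 ≤ (k:ℝ) := by exact_mod_cast Nat.succ_le_of_lt h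
          simp only [K, J]; linarith
        rw [abs_of_neg (by linarith : J - K < 0)]
        nlinarith [hJ.le]
      · -- k < j, so J ≥ K + 1
        have hJK : K + 1 ≤ J := by
          have : (k:ℝ) + 1 ≤ (j:ℝ) := by exact_mod_cast Nat.succ_le_of_lt h
          simp only [K, J]; linarith
        rw [abs_of_pos (by linarith : 0 < J - K)]
        nlinarith [hK.le]
    have hts : ∑' j, f j (((k : ℝ) + 1)⁻¹) = v k := by
      rw [tsum_eq_single k (fun j hj => by simp [hf_def, hψj j hj])]
      simp [hf_def, hψk]
    simp only [hc_def, hts, hv_def]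
    abel
  -- conclude
  have h0mem : (0:ℝ) ∈ c ⁻¹' A := by rw [Set.mem_preimage, hc0]; exact hxA
  obtain ⟨ε, hε, hball⟩ := Metric.isOpen_iff.1 hopen 0 h0mem
  obtain ⟨k, hk⟩ := exists_nat_one_div_lt hε
  have hmem : ((k : ℝ) + 1)⁻¹ ∈ Metric.ball (0:ℝ) ε := by
    have hK : (0:ℝ) < (k:ℝ) + 1 := by positivity
    rw [Metric.mem_ball, Real.dist_eq, sub_zero, abs_of_pos (by positivity)]
    rw [one_div] at hk
    exact hk
  have := hball hmem
  rw [Set.mem_preimage, hck k] at this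
  exact hy2 k this

end Aux

/-- A subset of `ℝⁿ` is open iff its preimage under every smooth curve `ℝ → ℝⁿ` is open;
equivalently, the usual topology of `ℝⁿ` is the final topology for all smooth curves. -/
theorem stmt19 (n : ℕ) :
    (∀ A : Set (Fin n → ℝ), IsOpen A ↔
      ∀ c : ℝ → Fin n → ℝ, ContDiff ℝ ∞ c → IsOpen (c ⁻¹' A)) ∧
    (inferInstance : TopologicalSpace (Fin n → ℝ)) =
      ⨆ c ∈ {c : ℝ → Fin n → ℝ | ContDiff ℝ ∞ c},
        TopologicalSpace.coinduced c inferInstance := by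
  have main : ∀ A : Set (Fin n → ℝ), IsOpen A ↔
      ∀ c : ℝ → Fin n → ℝ, ContDiff ℝ ∞ c → IsOpen (c ⁻¹' A) := by
    intro A
    constructor
    · intro hA c hc
      exact hA.preimage hc.continuous
    · exact key A
  refine ⟨main, ?_⟩
  refine TopologicalSpace.ext_iff.2 fun s => ?_
  rw [main s]
  simp only [isOpen_iSup_iff, isOpen_coinduced, Set.mem_setOf_eq]
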